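/- Let α > 1, let ζ be in the unit sphere of ℂ^d, let w ∈ 𝔹_d, and let z ∈ D_α(ζ) with ‖z‖ ≥ ‖w‖, where D_α(ζ) = { z ∈ 𝔹_d : |1 − ⟨z,ζ⟩| < (α/2)(1 − ‖z‖²) }. Then |1 − ⟨ζ,w⟩| and |1 − ⟨z,w⟩| are comparable with constants depending only on α, i.e. there exist c_α, C_α > 0 with c_α|1 − ⟨ζ,w⟩| ≤ |1 − ⟨z,w⟩| ≤ C_α|1 − ⟨ζ,w⟩|. -/

import Mathlib

open Complex

local notation "⟪" x ", " y "⟫" => @inner ℂ _ _ x y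

variable {E : Type*} [NormedAddCommGroup E] [InnerProductSpace ℂ E]

-- conj symmetry of the quantity
lemma norm_one_sub_inner_comm (a b : E) :
    ‖(1 : ℂ) - ⟪a, b⟫‖ = ‖(1 : ℂ) - ⟪b, a⟫‖ := by
  rw [← inner_conj_symm a b, show (1:ℂ) - (starRingEnd ℂ) ⟪b, a⟫ = (starRingEnd ℂ) ((1:ℂ) - ⟪b, a⟫)
    from by rw [map_sub, map_one], RCLike.norm_conj]

-- lower bound: ‖1 - ⟪a,b⟫‖ ≥ 1 - ‖a‖‖b‖
lemma one_sub_norm_mul_le (a b : E) (hb : ‖a‖ * ‖b‖ ≤ 1) :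
    1 - ‖a‖ * ‖b‖ ≤ ‖(1 : ℂ) - ⟪a, b⟫‖ := by
  have h1 : ‖⟪a, b⟫‖ ≤ ‖a‖ * ‖b‖ := norm_inner_le_norm a b
  have := norm_sub_norm_le (1 : ℂ) ⟪a, b⟫
  simp only [norm_one] at this
  linarith

-- key triangle inequality, middle point unit
lemma koranyi_tri (a b c : E) (ha : ‖a‖ ≤ 1) (hb : ‖b‖ ≤ 1) (hc : ‖c‖ = 1) :
    ‖(1 : ℂ) - ⟪a, b⟫‖ ≤
      (Real.sqrt ‖(1 : ℂ) - ⟪a, c⟫‖ + Real.sqrt ‖(1 : ℂ) - ⟪c, b⟫‖) ^ 2 := by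
  set a' : E := a - ⟪c, a⟫ • c with ha'
  set b' : E := b - ⟪c, b⟫ • c with hb'
  have hcc : ⟪c, c⟫ = (1 : ℂ) := by
    rw [inner_self_eq_norm_sq_to_K, hc]; norm_num
  have hdec : ⟪a', b'⟫ = ⟪a, b⟫ - ⟪a, c⟫ * ⟪c, b⟫ := by
    simp only [ha', hb', inner_sub_left, inner_sub_right, inner_smul_left,
      inner_smul_right, hcc, mul_one, inner_conj_symm]
    ring
  have key : (1 : ℂ) - ⟪a, b⟫ = ((1:ℂ) - ⟪a, c⟫) + ⟪a, c⟫ * ((1:ℂ) - ⟪c, b⟫) - ⟪a', b'⟫ := by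
    rw [hdec]; ring
  have hac : ‖⟪a, c⟫‖ ≤ 1 := by
    calc ‖⟪a, c⟫‖ ≤ ‖a‖ * ‖c‖ := norm_inner_le_norm a c
    _ ≤ 1 := by rw [hc]; simpa using ha
  have hcb : ‖⟪c, b⟫‖ ≤ 1 := by
    calc ‖⟪c, b⟫‖ ≤ ‖c‖ * ‖b‖ := norm_inner_le_norm c b
    _ ≤ 1 := by rw [hc]; simpa using hb
  -- norm of a'
  have hna : ∀ (x : E), ‖x‖ ≤ 1 → ‖x - ⟪c, x⟫ • c‖ ^ 2 ≤ 2 * ‖(1:ℂ) - ⟪x, c⟫‖ := by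
    intro x hx
    have hxx : ⟪x - ⟪c, x⟫ • c, x - ⟪c, x⟫ • c⟫ = ⟪x, x⟫ - ⟪c, x⟫ * (starRingEnd ℂ) ⟪c, x⟫ := by
      simp only [inner_sub_left, inner_sub_right, inner_smul_left, inner_smul_right, hcc,
        mul_one, inner_conj_symm]
      ring
    have hsq : (‖x - ⟪c, x⟫ • c‖ : ℝ) ^ 2 = ‖x‖ ^ 2 - ‖⟪c, x⟫‖ ^ 2 := by
      rw [@norm_sub_sq ℂ, inner_smul_right, ← inner_conj_symm x c, Complex.mul_conj,
        norm_smul, hc]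
      simp only [norm_one, mul_one, Complex.ofReal_re, RCLike.norm_ofNat]
      simp only [Complex.normSq_eq_norm_sq, RCLike.re_to_complex, Complex.ofReal_re]
      ring
    rw [hsq]
    have h1 : ‖⟪c, x⟫‖ = ‖⟪x, c⟫‖ := by rw [← inner_conj_symm]; exact RCLike.norm_conj _
    have h2 : 1 - ‖⟪x, c⟫‖ ≤ ‖(1:ℂ) - ⟪x, c⟫‖ := by
      have := norm_sub_norm_le (1 : ℂ) ⟪x, c⟫
      simp only [norm_one] at this; linarith
    have h3 : ‖⟪x, c⟫‖ ≤ 1 := by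
      calc ‖⟪x, c⟫‖ ≤ ‖x‖ * ‖c‖ := norm_inner_le_norm x c
      _ ≤ 1 := by rw [hc]; simpa using hx
    have h4 : ‖x‖ ^ 2 ≤ 1 := by nlinarith [norm_nonneg x]
    nlinarith [norm_nonneg (⟪x, c⟫ : ℂ)]
  have hA := hna a ha
  have hB' : ‖b - ⟪c, b⟫ • c‖ ^ 2 ≤ 2 * ‖(1:ℂ) - ⟪c, b⟫‖ := by
    have := hna b hb
    rwa [norm_one_sub_inner_comm b c] at this
  set A := ‖(1 : ℂ) - ⟪a, c⟫‖ with hAdef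
  set B := ‖(1 : ℂ) - ⟪c, b⟫‖ with hBdef
  have hA0 : 0 ≤ A := norm_nonneg _
  have hB0 : 0 ≤ B := norm_nonneg _
  have hprod : ‖⟪a', b'⟫‖ ≤ 2 * Real.sqrt A * Real.sqrt B := by
    calc ‖⟪a', b'⟫‖ ≤ ‖a'‖ * ‖b'‖ := norm_inner_le_norm a' b'
    _ ≤ Real.sqrt (2 * A) * Real.sqrt (2 * B) := by
        apply mul_le_mul ?_ ?_ (norm_nonneg _) (Real.sqrt_nonneg _)
        · rw [← Real.sqrt_sq (norm_nonneg a')]; exact Real.sqrt_le_sqrt hA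
        · rw [← Real.sqrt_sq (norm_nonneg b')]; exact Real.sqrt_le_sqrt hB'
    _ = 2 * Real.sqrt A * Real.sqrt B := by
        rw [Real.sqrt_mul (by norm_num), Real.sqrt_mul (by norm_num)]
        rw [show Real.sqrt 2 * Real.sqrt A * (Real.sqrt 2 * Real.sqrt B)
            = (Real.sqrt 2 * Real.sqrt 2) * (Real.sqrt A * Real.sqrt B) by ring]
        rw [Real.mul_self_sqrt (by norm_num)]; ring
  calc ‖(1 : ℂ) - ⟪a, b⟫‖ ≤ A + ‖⟪a, c⟫‖ * B + ‖⟪a', b'⟫‖ := by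
        rw [key]
        refine le_trans (norm_sub_le _ _) ?_
        gcongr
        refine le_trans (norm_add_le _ _) ?_
        gcongr
        exact le_of_eq (norm_mul _ _)
  _ ≤ A + B + 2 * Real.sqrt A * Real.sqrt B := by
        have : ‖⟪a, c⟫‖ * B ≤ B := by nlinarith
        linarith
  _ = (Real.sqrt A + Real.sqrt B) ^ 2 := by
        rw [add_sq, Real.sq_sqrt hA0, Real.sq_sqrt hB0]; ring

lemma normalize_bound (a z : E) (ha : ‖a‖ ≤ 1) (hz : ‖z‖ ≤ 1) (hz0 : z ≠ 0) :
    ‖(1:ℂ) - ⟪a, ((‖z‖ : ℂ)⁻¹) • z⟫‖ ≤ 2 * ‖(1:ℂ) - ⟪a, z⟫‖ := by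
  have hzpos : (0:ℝ) < ‖z‖ := norm_pos_iff.mpr hz0
  have hinner : ⟪a, ((‖z‖ : ℂ)⁻¹) • z⟫ = ((‖z‖ : ℂ)⁻¹) * ⟪a, z⟫ := inner_smul_right a z _
  have hid : (1:ℂ) - ⟪a, ((‖z‖ : ℂ)⁻¹) • z⟫
      = ((1:ℂ) - ⟪a, z⟫) + ((1:ℂ) - ((‖z‖ : ℂ)⁻¹)) * ⟪a, z⟫ := by
    rw [hinner]; ring
  have haz : ‖⟪a, z⟫‖ ≤ ‖z‖ := by
    calc ‖⟪a, z⟫‖ ≤ ‖a‖ * ‖z‖ := norm_inner_le_norm a z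
    _ ≤ 1 * ‖z‖ := by gcongr
    _ = ‖z‖ := one_mul _
  have h1 : (1:ℝ) ≤ ‖z‖⁻¹ := by
    have h2 := mul_inv_cancel₀ (ne_of_gt hzpos)
    nlinarith [inv_pos.mpr hzpos]
  have hsc : ‖(1:ℂ) - ((‖z‖ : ℂ)⁻¹)‖ = ‖z‖⁻¹ - 1 := by
    rw [show (1:ℂ) - ((‖z‖ : ℂ)⁻¹) = (((1 : ℝ) - ‖z‖⁻¹ : ℝ) : ℂ) by push_cast; ring,
      Complex.norm_real, Real.norm_eq_abs, abs_sub_comm]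
    exact abs_of_nonneg (by linarith)
  have hterm : ‖((1:ℂ) - ((‖z‖ : ℂ)⁻¹)) * ⟪a, z⟫‖ ≤ 1 - ‖z‖ := by
    rw [norm_mul, hsc]
    calc (‖z‖⁻¹ - 1) * ‖⟪a, z⟫‖ ≤ (‖z‖⁻¹ - 1) * ‖z‖ := by
          apply mul_le_mul_of_nonneg_left haz
          linarith
    _ = 1 - ‖z‖ := by field_simp
  have hlow : 1 - ‖z‖ ≤ ‖(1:ℂ) - ⟪a, z⟫‖ := by
    have h := one_sub_norm_mul_le a z (by nlinarith [norm_nonneg a, norm_nonneg z])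
    nlinarith [norm_nonneg z]
  calc ‖(1:ℂ) - ⟪a, ((‖z‖ : ℂ)⁻¹) • z⟫‖
      ≤ ‖(1:ℂ) - ⟪a, z⟫‖ + ‖((1:ℂ) - ((‖z‖ : ℂ)⁻¹)) * ⟪a, z⟫‖ := by
        rw [hid]; exact norm_add_le _ _
  _ ≤ ‖(1:ℂ) - ⟪a, z⟫‖ + (1 - ‖z‖) := by linarith
  _ ≤ 2 * ‖(1:ℂ) - ⟪a, z⟫‖ := by linarith

/-- For `α > 1`, `ζ` on the unit sphere of `ℂ^d`, `w ∈ 𝔹_d` and `z ∈ D_α(ζ)` with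
`‖z‖ ≥ ‖w‖`, the quantities `|1 − ⟨ζ,w⟩|` and `|1 − ⟨z,w⟩|` are comparable with
constants depending only on `α`. -/
theorem stmt3 (α : ℝ) (hα : 1 < α) :
    ∃ c C : ℝ, 0 < c ∧ 0 < C ∧
      ∀ (d : ℕ) (ζ w z : EuclideanSpace ℂ (Fin d)),
        ‖ζ‖ = 1 → ‖w‖ < 1 → ‖z‖ < 1 →
        ‖(1 : ℂ) - ⟪ζ, z⟫‖ < α / 2 * (1 - ‖z‖ ^ 2) →
        ‖w‖ ≤ ‖z‖ →
        c * ‖(1 : ℂ) - ⟪w, ζ⟫‖ ≤ ‖(1 : ℂ) - ⟪w, z⟫‖ ∧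
        ‖(1 : ℂ) - ⟪w, z⟫‖ ≤ C * ‖(1 : ℂ) - ⟪w, ζ⟫‖ := by
  have hα0 : (0:ℝ) < α := by linarith
  set K : ℝ := (Real.sqrt 2 + Real.sqrt (2*α))^2 with hKdef
  have hs2 : (1:ℝ) ≤ Real.sqrt 2 := by
    rw [show (1:ℝ) = Real.sqrt 1 by simp]
    exact Real.sqrt_le_sqrt (by norm_num)
  have hK1 : (1:ℝ) ≤ K := by
    rw [hKdef]; nlinarith [Real.sqrt_nonneg (2*α)]
  have hK : (0:ℝ) < K := by linarith
  refine ⟨K⁻¹, (1 + Real.sqrt α)^2, inv_pos.mpr hK, by positivity, ?_⟩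
  intro d ζ w z hζ hw hz hD hwz
  have hw1 : ‖w‖ ≤ 1 := hw.le
  have hz1 : ‖z‖ ≤ 1 := hz.le
  have hζ1 : ‖ζ‖ ≤ 1 := hζ.le
  set A := ‖(1 : ℂ) - ⟪w, ζ⟫‖ with hAdef
  set B := ‖(1 : ℂ) - ⟪ζ, z⟫‖ with hBdef
  set T := ‖(1 : ℂ) - ⟪w, z⟫‖ with hTdef
  have hA0 : 0 ≤ A := norm_nonneg _
  have hB0 : 0 ≤ B := norm_nonneg _
  have hT0 : 0 ≤ T := norm_nonneg _
  have hBz : B ≤ α * (1 - ‖z‖) := by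
    have h1 : (1:ℝ) - ‖z‖^2 ≤ 2*(1-‖z‖) := by nlinarith [norm_nonneg z]
    nlinarith [hD]
  have hA1 : 1 - ‖w‖ ≤ A := by
    have := one_sub_norm_mul_le w ζ (by rw [hζ, mul_one]; exact hw1)
    rwa [hζ, mul_one] at this
  have hT1 : 1 - ‖w‖ * ‖z‖ ≤ T := one_sub_norm_mul_le w z
    (by nlinarith [norm_nonneg w, norm_nonneg z])
  have hBA : B ≤ α * A := by nlinarith
  have hwzz : ‖w‖ * ‖z‖ ≤ ‖z‖ := mul_le_of_le_one_left (norm_nonneg z) hw1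
  have hBT : B ≤ α * T := by nlinarith
  constructor
  · -- lower bound
    by_cases hz0 : z = 0
    · have hw0 : w = 0 := by
        have : ‖w‖ ≤ 0 := by rw [hz0] at hwz; simpa using hwz
        exact norm_le_zero_iff.mp this
      have hAv : A = 1 := by rw [hAdef, hw0, inner_zero_left]; simp
      have hTv : T = 1 := by rw [hTdef, hw0, inner_zero_left]; simp
      rw [hAv, hTv, mul_one]
      exact inv_le_one_of_one_le₀ hK1
    · set u : EuclideanSpace ℂ (Fin d) := ((‖z‖ : ℂ)⁻¹) • z with hu
      have hzpos : (0:ℝ) < ‖z‖ := norm_pos_iff.mpr hz0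
      have hun : ‖u‖ = 1 := by
        rw [hu, norm_smul]
        simp [abs_of_pos hzpos, inv_mul_cancel₀ (ne_of_gt hzpos)]
      have htri := koranyi_tri w ζ u hw1 hζ1 hun
      have h1 : ‖(1:ℂ) - ⟪w, u⟫‖ ≤ 2 * T := normalize_bound w z hw1 hz1 hz0
      have h2 : ‖(1:ℂ) - ⟪u, ζ⟫‖ ≤ 2 * α * T := by
        rw [norm_one_sub_inner_comm]
        calc ‖(1:ℂ) - ⟪ζ, u⟫‖ ≤ 2 * B := normalize_bound ζ z hζ1 hz1 hz0
        _ ≤ 2 * (α * T) := by linarith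
        _ = 2 * α * T := by ring
      have hs1 : Real.sqrt ‖(1:ℂ) - ⟪w, u⟫‖ ≤ Real.sqrt 2 * Real.sqrt T := by
        rw [← Real.sqrt_mul (by norm_num)]
        exact Real.sqrt_le_sqrt h1
      have hs2' : Real.sqrt ‖(1:ℂ) - ⟪u, ζ⟫‖ ≤ Real.sqrt (2*α) * Real.sqrt T := by
        rw [← Real.sqrt_mul (by positivity)]
        exact Real.sqrt_le_sqrt (by linarith)
      have hfin : A ≤ K * T := by
        have hsum : Real.sqrt ‖(1:ℂ) - ⟪w, u⟫‖ + Real.sqrt ‖(1:ℂ) - ⟪u, ζ⟫‖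
            ≤ (Real.sqrt 2 + Real.sqrt (2*α)) * Real.sqrt T := by
          rw [add_mul]; exact add_le_add hs1 hs2'
        have hnn : 0 ≤ Real.sqrt ‖(1:ℂ) - ⟪w, u⟫‖ + Real.sqrt ‖(1:ℂ) - ⟪u, ζ⟫‖ :=
          add_nonneg (Real.sqrt_nonneg _) (Real.sqrt_nonneg _)
        calc A ≤ (Real.sqrt ‖(1:ℂ) - ⟪w, u⟫‖ + Real.sqrt ‖(1:ℂ) - ⟪u, ζ⟫‖)^2 := htri
        _ ≤ ((Real.sqrt 2 + Real.sqrt (2*α)) * Real.sqrt T)^2 := by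
            apply pow_le_pow_left₀ hnn hsum
        _ = K * (Real.sqrt T)^2 := by rw [hKdef]; ring
        _ = K * T := by rw [Real.sq_sqrt hT0]
      calc K⁻¹ * A ≤ K⁻¹ * (K * T) := by
            apply mul_le_mul_of_nonneg_left hfin (le_of_lt (inv_pos.mpr hK))
      _ = T := by field_simp
  · -- upper bound
    have htri := koranyi_tri w z ζ hw1 hz1 hζ
    have hsB : Real.sqrt B ≤ Real.sqrt α * Real.sqrt A := by
      rw [← Real.sqrt_mul hα0.le]
      exact Real.sqrt_le_sqrt hBA
    have hsum : Real.sqrt A + Real.sqrt B ≤ (1 + Real.sqrt α) * Real.sqrt A := by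
      rw [add_mul, one_mul]; exact add_le_add le_rfl hsB
    calc T ≤ (Real.sqrt A + Real.sqrt B)^2 := htri
    _ ≤ ((1 + Real.sqrt α) * Real.sqrt A)^2 := by
        apply pow_le_pow_left₀ (add_nonneg (Real.sqrt_nonneg _) (Real.sqrt_nonneg _)) hsum
    _ = (1 + Real.sqrt α)^2 * (Real.sqrt A)^2 := by ring
    _ = (1 + Real.sqrt α)^2 * A := by rw [Real.sq_sqrt hA0]
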